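/- Let U ⊆ ℝ² be open and bounded with 0 ∉ ∂U, and let F: Ψ⁻¹(∂U) → ℝ² be continuous and 2π-periodic in the first variable. Then for every v = (v^θ, v^r) ∈ ℝ² with v^θ ∉ conv(2π·rot(F, ∂U)) — equivalently, v^θ/(2π) outside the convex hull of the rotation set of F on ∂U — one has 𝔇(F, U, v) = 0. In particular 𝔇(F, U, (2πi, 0)) = 0 for every integer i ∉ Σ(F, ∂U). -/

import Mathlib

noncomputable section

open Set Metric Bornology

/-- Clockwise polar coordinates `Ψ(θ, r) = (r cos θ, -r sin θ)`. -/
def PsiP (p : ℝ × ℝ) : ℝ × ℝ := (p.2 * Real.cos p.1, -(p.2 * Real.sin p.1))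

/-- The set `Ψ⁻¹(E)` in the open half-plane (points with positive radius mapping into `E`). -/
def preE (E : Set (ℝ × ℝ)) : Set (ℝ × ℝ) := {p : ℝ × ℝ | 0 < p.2 ∧ PsiP p ∈ E}

/-- `F` is `2π`-periodic in the first variable, on `Ψ⁻¹(E)`. -/
def PerOn (F : ℝ × ℝ → ℝ × ℝ) (E : Set (ℝ × ℝ)) : Prop :=
  ∀ p : ℝ × ℝ, p ∈ preE E → F (p.1 + 2 * Real.pi, p.2) = F p

/-- The rotation set `rot(F, E) = {F^θ(y)/(2π) : y ∈ Ψ⁻¹(E)}`. -/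
def rotSet (F : ℝ × ℝ → ℝ × ℝ) (E : Set (ℝ × ℝ)) : Set ℝ :=
  {t : ℝ | ∃ p ∈ preE E, t = (F p).1 / (2 * Real.pi)}

/-- `Σ(F, E) = ℤ ∩ conv (rot(F, E))`. -/
def SigmaSet (F : ℝ × ℝ → ℝ × ℝ) (E : Set (ℝ × ℝ)) : Set ℤ :=
  {n : ℤ | (n : ℝ) ∈ convexHull ℝ (rotSet F E)}

/-- `ν_i = (2πi, 0)`. -/
def nu (i : ℤ) : ℝ × ℝ := (2 * Real.pi * i, 0)

/-- A Brouwer degree theory on the plane, characterized by the classical axioms: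
normalization, dependence only on boundary values, homotopy invariance, additivity,
and the solution property. -/
structure DegTheory where
  deg : (ℝ × ℝ → ℝ × ℝ) → Set (ℝ × ℝ) → ℝ × ℝ → ℤ
  deg_id : ∀ (U : Set (ℝ × ℝ)) (v : ℝ × ℝ), IsOpen U → IsBounded U → v ∈ U →
    deg id U v = 1
  deg_congr : ∀ (g₁ g₂ : ℝ × ℝ → ℝ × ℝ) (U : Set (ℝ × ℝ)) (v : ℝ × ℝ),
    IsOpen U → IsBounded U → ContinuousOn g₁ (closure U) → ContinuousOn g₂ (closure U) →
    (∀ x ∈ frontier U, g₁ x = g₂ x) → (∀ x ∈ frontier U, g₁ x ≠ v) →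
    deg g₁ U v = deg g₂ U v
  deg_homotopy : ∀ (H : (ℝ × ℝ) × ℝ → ℝ × ℝ) (U : Set (ℝ × ℝ)) (v : ℝ × ℝ),
    IsOpen U → IsBounded U →
    ContinuousOn H ((closure U) ×ˢ Icc (0:ℝ) 1) →
    (∀ x ∈ frontier U, ∀ t ∈ Icc (0:ℝ) 1, H (x, t) ≠ v) →
    deg (fun x => H (x, 0)) U v = deg (fun x => H (x, 1)) U v
  deg_additive : ∀ (g : ℝ × ℝ → ℝ × ℝ) (U U₁ U₂ : Set (ℝ × ℝ)) (v : ℝ × ℝ),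
    IsOpen U → IsOpen U₁ → IsOpen U₂ → IsBounded U →
    U₁ ⊆ U → U₂ ⊆ U → Disjoint U₁ U₂ → ContinuousOn g (closure U) →
    (∀ x ∈ closure U \ (U₁ ∪ U₂), g x ≠ v) →
    deg g U v = deg g U₁ v + deg g U₂ v
  deg_exists : ∀ (g : ℝ × ℝ → ℝ × ℝ) (U : Set (ℝ × ℝ)) (v : ℝ × ℝ),
    IsOpen U → IsBounded U → ContinuousOn g (closure U) →
    deg g U v ≠ 0 → ∃ x ∈ U, g x = v

/-- `g : ℝ² → ℝ²` represents `F_ext ∘ Ψ⁻¹` for an admissible extension `F_ext` of `F`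
(`F` being defined on `Ψ⁻¹(∂U)`): `g` is continuous on the plane and agrees with
`F ∘ Ψ⁻¹` on `∂U`.  (Via `F_ext = g ∘ Ψ`, this is equivalent to the existence of a
continuous extension `F_ext` of `F` to the closed half-plane which is `2π`-periodic in
the first variable and constant on the line `r = 0`.) -/
def IsDExt (F : ℝ × ℝ → ℝ × ℝ) (U : Set (ℝ × ℝ)) (g : ℝ × ℝ → ℝ × ℝ) : Prop :=
  Continuous g ∧ ∀ p : ℝ × ℝ, p ∈ preE (frontier U) → g (PsiP p) = F p

/-- Euclidean open ball of radius `ρ` about the origin of the plane. -/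
def ball2 (ρ : ℝ) : Set (ℝ × ℝ) := {x : ℝ × ℝ | x.1 ^ 2 + x.2 ^ 2 < ρ ^ 2}

/-- Euclidean circle of radius `ρ` about the origin of the plane. -/
def sphere2 (ρ : ℝ) : Set (ℝ × ℝ) := {x : ℝ × ℝ | x.1 ^ 2 + x.2 ^ 2 = ρ ^ 2}

/-- Euclidean norm on the plane. -/
def sqnorm (x : ℝ × ℝ) : ℝ := Real.sqrt (x.1 ^ 2 + x.2 ^ 2)

/-- `Φ` is the (unique) lift, through the clockwise polar coordinates `Ψ`, of the
evolution map `φ` on `[0,T] × Ψ⁻¹(S)`: it is continuous, starts from the identity,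
projects to `φ` via `Ψ`, stays in the open half-plane, and is equivariant under the
deck transformation `θ ↦ θ + 2π`. -/
def IsLiftOn (φ : ℝ → ℝ × ℝ → ℝ × ℝ) (Φ : ℝ → ℝ × ℝ → ℝ × ℝ) (T : ℝ)
    (S : Set (ℝ × ℝ)) : Prop :=
  ContinuousOn (fun q : ℝ × (ℝ × ℝ) => Φ q.1 q.2) (Icc 0 T ×ˢ preE S) ∧
  (∀ p ∈ preE S, Φ 0 p = p) ∧
  (∀ t ∈ Icc 0 T, ∀ p ∈ preE S,
    PsiP (Φ t p) = φ t (PsiP p) ∧ 0 < (Φ t p).2 ∧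
    Φ t (p.1 + 2 * Real.pi, p.2) = ((Φ t p).1 + 2 * Real.pi, (Φ t p).2))


lemma comb_gt {a b v t : ℝ} (ha : v < a) (hb : v < b) (ht0 : 0 ≤ t) (ht1 : t ≤ 1) :
    v < (1 - t) * a + t * b := by
  rcases eq_or_lt_of_le ht0 with h | h
  · rw [← h]; simpa using ha
  · nlinarith

lemma comb_lt {a b v t : ℝ} (ha : a < v) (hb : b < v) (ht0 : 0 ≤ t) (ht1 : t ≤ 1) :
    (1 - t) * a + t * b < v := by
  rcases eq_or_lt_of_le ht0 with h | h
  · rw [← h]; simpa using ha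
  · nlinarith

lemma deg_zero_of_line (D : DegTheory) {U : Set (ℝ × ℝ)} {g : ℝ × ℝ → ℝ × ℝ} {v : ℝ × ℝ}
    {c1 : ℝ} (hU : IsOpen U) (hUb : IsBounded U) (hg : Continuous g) (hne : c1 ≠ v.1)
    (hb : ∀ x ∈ frontier U, ∀ t ∈ Icc (0:ℝ) 1,
      ((1 - t) * (g x).1 + t * c1, (1 - t) * (g x).2) ≠ v) :
    D.deg g U v = 0 := by
  set H : (ℝ × ℝ) × ℝ → ℝ × ℝ :=
    fun q => ((1 - q.2) * (g q.1).1 + q.2 * c1, (1 - q.2) * (g q.1).2) with hH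
  have hHc : Continuous H := by
    apply Continuous.prodMk
    · exact (continuous_const.sub continuous_snd).mul
        ((continuous_fst.comp (hg.comp continuous_fst))) |>.add
        (continuous_snd.mul continuous_const)
    · exact (continuous_const.sub continuous_snd).mul
        (continuous_snd.comp (hg.comp continuous_fst))
  have h0 : (fun x => H (x, 0)) = g := funext fun x => by simp [hH]
  have h1 : (fun x => H (x, 1)) = fun _ => ((c1, 0) : ℝ × ℝ) := funext fun x => by simp [hH]
  have key := D.deg_homotopy H U v hU hUb hHc.continuousOn
    (fun x hx t ht => hb x hx t ht)
  rw [h0, h1] at key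
  rw [key]
  by_contra hd
  obtain ⟨x, _, hx⟩ := D.deg_exists _ U v hU hUb continuousOn_const hd
  exact hne (congrArg Prod.fst hx)

/-- `𝔇(F,U,v) = 0` whenever `v^θ/(2π)` lies outside the convex hull of the
rotation set of `F` on `∂U`; in particular `𝔇(F,U,ν_i) = 0` for every integer
`i ∉ Σ(F,∂U)`. -/
theorem statement9 (D : DegTheory) (U : Set (ℝ × ℝ)) (F : ℝ × ℝ → ℝ × ℝ)
    (hU : IsOpen U) (hUb : IsBounded U) (h0 : (0 : ℝ × ℝ) ∉ frontier U)
    (hFc : ContinuousOn F (preE (frontier U))) (hFper : PerOn F (frontier U)) :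
    (∀ v : ℝ × ℝ, v.1 / (2 * Real.pi) ∉ convexHull ℝ (rotSet F (frontier U)) →
      ∀ g : ℝ × ℝ → ℝ × ℝ, IsDExt F U g → D.deg g U v = 0) ∧
    (∀ i : ℤ, i ∉ SigmaSet F (frontier U) →
      ∀ g : ℝ × ℝ → ℝ × ℝ, IsDExt F U g → D.deg g U (nu i) = 0) := by
  
  have pi_pos := Real.pi_pos
  have main : ∀ v : ℝ × ℝ, v.1 / (2 * Real.pi) ∉ convexHull ℝ (rotSet F (frontier U)) →
      ∀ g : ℝ × ℝ → ℝ × ℝ, IsDExt F U g → D.deg g U v = 0 := by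
    intro v hv g hg
    have hbd : ∀ x ∈ frontier U, ∃ p ∈ preE (frontier U), g x = F p := by
      intro x hx
      have hx0 : x ≠ 0 := fun h => h0 (h ▸ hx)
      set z : ℂ := ⟨x.1, x.2⟩ with hz
      have hz0 : z ≠ 0 := by
        intro h
        apply hx0
        have h1 : z.re = 0 := by rw [h]; simp
        have h2 : z.im = 0 := by rw [h]; simp
        exact Prod.ext h1 h2
      have habs : 0 < ‖z‖ := norm_pos_iff.mpr hz0
      have hPsi : PsiP (-(Complex.arg z), ‖z‖) = x := by
        have hre : ‖z‖ * Real.cos (Complex.arg z) = z.re :=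
          Complex.norm_mul_cos_arg z
        have him : ‖z‖ * Real.sin (Complex.arg z) = z.im :=
          Complex.norm_mul_sin_arg z
        simp only [PsiP, Real.cos_neg, Real.sin_neg, mul_neg, neg_neg]
        rw [hre, him]
      have hp : (-(Complex.arg z), ‖z‖) ∈ preE (frontier U) := by
        refine ⟨habs, ?_⟩
        rw [hPsi]; exact hx
      refine ⟨_, hp, ?_⟩
      rw [← hPsi]
      exact hg.2 _ hp
    have hdich : (∀ p ∈ preE (frontier U), v.1 < (F p).1) ∨
        (∀ p ∈ preE (frontier U), (F p).1 < v.1) := by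
      by_contra hc
      push_neg at hc
      obtain ⟨⟨p1, hp1, h1⟩, ⟨p2, hp2, h2⟩⟩ := hc
      apply hv
      have m1 : (F p1).1 / (2 * Real.pi) ∈ rotSet F (frontier U) := ⟨p1, hp1, rfl⟩
      have m2 : (F p2).1 / (2 * Real.pi) ∈ rotSet F (frontier U) := ⟨p2, hp2, rfl⟩
      have c1 := subset_convexHull ℝ (rotSet F (frontier U)) m1
      have c2 := subset_convexHull ℝ (rotSet F (frontier U)) m2
      have hconv := (convex_convexHull ℝ (rotSet F (frontier U))).ordConnected
      have h2pi : (0:ℝ) < 2 * Real.pi := by linarith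
      exact hconv.out c1 c2 ⟨by apply div_le_div_of_nonneg_right h1 h2pi.le,
        by apply div_le_div_of_nonneg_right h2 h2pi.le⟩
    rcases hdich with hcase | hcase
    · refine deg_zero_of_line D hU hUb hg.1 (c1 := v.1 + 1) (by linarith) ?_
      intro x hx t ht heq
      obtain ⟨p, hp, hgx⟩ := hbd x hx
      have hfirst : v.1 < (1 - t) * (g x).1 + t * (v.1 + 1) := by
        apply comb_gt _ (by linarith) ht.1 ht.2
        rw [hgx]; exact hcase p hp
      have := congrArg Prod.fst heq
      simp only at this
      linarith [this.le, this.ge]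
    · refine deg_zero_of_line D hU hUb hg.1 (c1 := v.1 - 1) (by linarith) ?_
      intro x hx t ht heq
      obtain ⟨p, hp, hgx⟩ := hbd x hx
      have hfirst : (1 - t) * (g x).1 + t * (v.1 - 1) < v.1 := by
        apply comb_lt _ (by linarith) ht.1 ht.2
        rw [hgx]; exact hcase p hp
      have := congrArg Prod.fst heq
      simp only at this
      linarith [this.le, this.ge]
  refine ⟨main, ?_⟩
  intro i hi g hg
  apply main
  · have hpi : (2 * Real.pi) ≠ 0 := by positivity
    have : (nu i).1 / (2 * Real.pi) = (i : ℝ) := by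
      simp only [nu]
      field_simp
    rw [this]
    exact hi
  · exact hg
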